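/- Global attractivity with fading regularization: suppose y_i = φ_iθ, R_k → 0 as k → ∞, (‖θ_reg,k‖) is bounded, and there exists k_rank with λ_min(Σ_{i=0}^{k_rank} φ_iᵀΓ_iφ_i) > 0. Then the RLS estimates θ_{k+1} = (R_k + Σ_{i=0}^k φ_iᵀΓ_iφ_i)⁻¹(R_kθ_reg,k + Σ_{i=0}^k φ_iᵀΓ_iy_i) satisfy θ_k → θ as k → ∞. -/

import Mathlib

open Matrix Finset Filter

noncomputable def euclNorm {n : ℕ} (x : Fin n → ℝ) : ℝ :=
  ‖(EuclideanSpace.equiv (Fin n) ℝ).symm x‖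

-- helpers
lemma sum_mulVec' {m n : ℕ} {ι : Type*} (s : Finset ι) (M : ι → Matrix (Fin m) (Fin n) ℝ)
    (x : Fin n → ℝ) : (∑ i ∈ s, M i) *ᵥ x = ∑ i ∈ s, (M i) *ᵥ x := by
  funext j
  simp only [Matrix.mulVec, dotProduct, Matrix.sum_apply, Finset.sum_apply, Finset.sum_mul]
  rw [Finset.sum_comm]

lemma posSemidef_sum {n : ℕ} {ι : Type*} (s : Finset ι) (M : ι → Matrix (Fin n) (Fin n) ℝ)
    (h : ∀ i ∈ s, (M i).PosSemidef) : (∑ i ∈ s, M i).PosSemidef := by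
  classical
  induction s using Finset.induction_on with
  | empty => simpa using Matrix.PosSemidef.zero
  | insert _ _ hx ih =>
    rw [Finset.sum_insert hx]
    exact ((h _ (Finset.mem_insert_self _ _)).add (ih fun i hi => h i (Finset.mem_insert_of_mem hi)))

lemma dot_eq_inner {n : ℕ} (x w : Fin n → ℝ) :
    x ⬝ᵥ w = inner ℝ ((EuclideanSpace.equiv (Fin n) ℝ).symm x)
      ((EuclideanSpace.equiv (Fin n) ℝ).symm w) := by
  simp [dotProduct, PiLp.inner_apply, RCLike.inner_apply, mul_comm]

lemma euclNorm_sq {n : ℕ} (x : Fin n → ℝ) : x ⬝ᵥ x = euclNorm x ^ 2 := by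
  rw [dot_eq_inner, euclNorm, real_inner_self_eq_norm_sq]

lemma sub_smul_one_posSemidef {n : ℕ} {S : Matrix (Fin n) (Fin n) ℝ} (hS : S.PosSemidef) :
    (S - (⨅ i, hS.1.eigenvalues i) • (1 : Matrix (Fin n) (Fin n) ℝ)).PosSemidef := by
  set lam := ⨅ i, hS.1.eigenvalues i with hlamdef
  have hle : ∀ i, lam ≤ hS.1.eigenvalues i := fun i =>
    ciInf_le (Set.Finite.bddBelow (Set.finite_range _)) i
  set U : Matrix (Fin n) (Fin n) ℝ := (hS.1.eigenvectorUnitary : Matrix (Fin n) (Fin n) ℝ) with hUdef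
  have h1 : U * star U = 1 := Matrix.mem_unitaryGroup_iff.mp hS.1.eigenvectorUnitary.2
  have key : S - lam • (1 : Matrix (Fin n) (Fin n) ℝ) =
      U * Matrix.diagonal (fun i => hS.1.eigenvalues i - lam) * star U := by
    have hspec := hS.1.spectral_theorem
    have h2 : lam • (1 : Matrix (Fin n) (Fin n) ℝ) = U * (lam • (1 : Matrix (Fin n) (Fin n) ℝ)) * star U := by
      rw [Matrix.mul_smul, Matrix.smul_mul, Matrix.mul_one, h1]
    calc S - lam • (1 : Matrix (Fin n) (Fin n) ℝ)
        = U * Matrix.diagonal (RCLike.ofReal ∘ hS.1.eigenvalues) * star U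
          - U * (lam • (1 : Matrix (Fin n) (Fin n) ℝ)) * star U := by simp only [Unitary.conjStarAlgAut_apply, Unitary.coe_star] at hspec; rw [← hspec, ← h2]
      _ = U * (Matrix.diagonal (hS.1.eigenvalues) - Matrix.diagonal (fun _ => lam)) * star U := by
          rw [Matrix.smul_one_eq_diagonal, Matrix.mul_sub, Matrix.sub_mul]
          rfl
      _ = U * Matrix.diagonal (fun i => hS.1.eigenvalues i - lam) * star U := by
          rw [Matrix.diagonal_sub]
  rw [key]
  have hd : Matrix.PosSemidef (Matrix.diagonal fun i => hS.1.eigenvalues i - lam) :=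
    Matrix.PosSemidef.diagonal (fun i => sub_nonneg.2 (hle i))
  simpa [Matrix.star_eq_conjTranspose] using hd.mul_mul_conjTranspose_same U

lemma abs_le_euclNorm {n : ℕ} (x : Fin n → ℝ) (i : Fin n) : |x i| ≤ euclNorm x := by
  rw [euclNorm, EuclideanSpace.norm_eq]
  have h1 : |x i| = Real.sqrt (|x i| ^ 2) := by
    rw [Real.sqrt_sq (abs_nonneg _)]
  rw [h1]
  apply Real.sqrt_le_sqrt
  have : ‖((EuclideanSpace.equiv (Fin n) ℝ).symm x) i‖ = |x i| := rfl
  calc |x i| ^ 2 = ‖((EuclideanSpace.equiv (Fin n) ℝ).symm x) i‖ ^ 2 := by rw [this]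
    _ ≤ ∑ j, ‖((EuclideanSpace.equiv (Fin n) ℝ).symm x) j‖ ^ 2 :=
        Finset.single_le_sum (f := fun j => ‖((EuclideanSpace.equiv (Fin n) ℝ).symm x) j‖ ^ 2)
          (fun j _ => by positivity) (Finset.mem_univ i)

lemma euclNorm_sub_le {n : ℕ} (x y : Fin n → ℝ) : euclNorm (x - y) ≤ euclNorm x + euclNorm y := by
  simp only [euclNorm, map_sub]
  exact norm_sub_le _ _

theorem fading_reg_global_attractivity (p n : ℕ)
    (φ : ℕ → Matrix (Fin p) (Fin n) ℝ) (y : ℕ → Fin p → ℝ)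
    (Γ : ℕ → Matrix (Fin p) (Fin p) ℝ) (hΓ : ∀ i, (Γ i).PosSemidef)
    (R : ℕ → Matrix (Fin n) (Fin n) ℝ) (hR : ∀ i, (R i).PosSemidef)
    (hpd : ∀ k, (R k + ∑ i ∈ range (k + 1), (φ i)ᵀ * Γ i * φ i).PosDef)
    (θreg : ℕ → Fin n → ℝ)
    (θtrue : Fin n → ℝ) (hy : ∀ i, y i = (φ i).mulVec θtrue)
    (hRlim : Tendsto R atTop (nhds 0))
    (hbdd : ∃ C : ℝ, ∀ k, euclNorm (θreg k) ≤ C)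
    (krank : ℕ)
    (hH : (∑ i ∈ range (krank + 1), (φ i)ᵀ * Γ i * φ i).PosSemidef)
    (hlam : 0 < ⨅ i, hH.1.eigenvalues i)
    (θ : ℕ → Fin n → ℝ)
    (hθ : ∀ k, θ (k + 1) = (R k + ∑ i ∈ range (k + 1), (φ i)ᵀ * Γ i * φ i)⁻¹.mulVec
      ((R k).mulVec (θreg k) + ∑ i ∈ range (k + 1), ((φ i)ᵀ * Γ i).mulVec (y i))) :
    Tendsto θ atTop (nhds θtrue) := by
  classical
  obtain ⟨C, hC⟩ := hbdd
  set S : ℕ → Matrix (Fin n) (Fin n) ℝ := fun k => ∑ i ∈ range (k + 1), (φ i)ᵀ * Γ i * φ i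
    with hSdef
  set lam : ℝ := ⨅ i, hH.1.eigenvalues i with hlamdef
  set e := EuclideanSpace.equiv (Fin n) ℝ with hedef
  have hterm : ∀ i, ((φ i)ᵀ * Γ i * φ i).PosSemidef := fun i => by
    simpa [Matrix.conjTranspose_eq_transpose_of_trivial] using
      (hΓ i).conjTranspose_mul_mul_same (φ i)
  -- error equation
  have herr : ∀ k, (R k + S k) *ᵥ (θ (k + 1) - θtrue) = (R k) *ᵥ (θreg k - θtrue) := by
    intro k
    have hinv : (R k + S k) * (R k + S k)⁻¹ = 1 :=
      Matrix.mul_nonsing_inv _ (isUnit_iff_ne_zero.mpr (hpd k).det_pos.ne')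
    have hb : (R k + S k) *ᵥ θ (k + 1) = (R k) *ᵥ θreg k + S k *ᵥ θtrue := by
      rw [hθ k, Matrix.mulVec_mulVec, hinv, Matrix.one_mulVec]
      congr 1
      rw [hSdef]
      rw [sum_mulVec']
      exact Finset.sum_congr rfl fun i _ => by rw [hy i, Matrix.mulVec_mulVec]
    rw [Matrix.mulVec_sub, hb, Matrix.add_mulVec, Matrix.mulVec_sub]
    abel
  -- quadratic lower bound
  have hbound : ∀ k, krank ≤ k →
      euclNorm (θ (k + 1) - θtrue) ≤ lam⁻¹ * euclNorm ((R k) *ᵥ (θreg k - θtrue)) := by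
    intro k hk
    set x := θ (k + 1) - θtrue with hx
    set w := (R k) *ᵥ (θreg k - θtrue) with hw
    have h1 : lam * (x ⬝ᵥ x) ≤ x ⬝ᵥ (S krank *ᵥ x) := by
      have h := (sub_smul_one_posSemidef hH).dotProduct_mulVec_nonneg x
      simp only [star_trivial, Matrix.sub_mulVec, dotProduct_sub,
        Matrix.smul_mulVec, Matrix.one_mulVec, dotProduct_smul, smul_eq_mul] at h
      linarith
    have h2 : x ⬝ᵥ (S krank *ᵥ x) ≤ x ⬝ᵥ ((R k + S k) *ᵥ x) := by
      have hdiff : S k - S krank = ∑ i ∈ Finset.Ico (krank + 1) (k + 1), (φ i)ᵀ * Γ i * φ i := by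
        rw [hSdef]
        exact (Finset.sum_Ico_eq_sub _ (by omega)).symm
      have hpsd : (R k + (S k - S krank)).PosSemidef :=
        (hR k).add (hdiff ▸ posSemidef_sum _ _ fun i _ => hterm i)
      have h := hpsd.dotProduct_mulVec_nonneg x
      simp only [star_trivial, Matrix.add_mulVec, Matrix.sub_mulVec, dotProduct_add,
        dotProduct_sub] at h
      rw [Matrix.add_mulVec, dotProduct_add]
      linarith
    have h3 : x ⬝ᵥ ((R k + S k) *ᵥ x) = x ⬝ᵥ w := by rw [hx, herr k]
    have h4 : x ⬝ᵥ w ≤ euclNorm x * euclNorm w := by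
      rw [dot_eq_inner]
      exact real_inner_le_norm _ _
    have hx2 : x ⬝ᵥ x = euclNorm x ^ 2 := euclNorm_sq x
    have hnx : (0:ℝ) ≤ euclNorm x := norm_nonneg _
    have hnw : (0:ℝ) ≤ euclNorm w := norm_nonneg _
    have hkey : lam * euclNorm x ≤ euclNorm w := by
      rcases eq_or_lt_of_le hnx with h0 | h0
      · rw [← h0, mul_zero]; exact hnw
      · have hchain : lam * euclNorm x ^ 2 ≤ euclNorm x * euclNorm w := by
          rw [← hx2]
          calc lam * (x ⬝ᵥ x) ≤ x ⬝ᵥ (S krank *ᵥ x) := h1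
            _ ≤ x ⬝ᵥ ((R k + S k) *ᵥ x) := h2
            _ = x ⬝ᵥ w := h3
            _ ≤ euclNorm x * euclNorm w := h4
        nlinarith
    have := mul_le_mul_of_nonneg_left hkey (le_of_lt (inv_pos.2 hlam))
    rwa [← mul_assoc, inv_mul_cancel₀ hlam.ne', one_mul] at this
  -- entries of R tend to zero
  have hentry : ∀ j i, Tendsto (fun k => R k j i) atTop (nhds 0) := by
    intro j i
    have h1 := ((continuous_apply j).tendsto (0 : Matrix (Fin n) (Fin n) ℝ)).comp hRlim
    have h2 := ((continuous_apply i).tendsto ((0 : Matrix (Fin n) (Fin n) ℝ) j)).comp h1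
    exact h2
  have hC0 : (0:ℝ) ≤ C := le_trans (norm_nonneg _) (hC 0)
  have hCnn : (0:ℝ) ≤ C + euclNorm θtrue := add_nonneg hC0 (norm_nonneg _)
  have hvb : ∀ k i, |θreg k i - θtrue i| ≤ C + euclNorm θtrue := by
    intro k i
    calc |θreg k i - θtrue i| = |(θreg k - θtrue) i| := rfl
      _ ≤ euclNorm (θreg k - θtrue) := abs_le_euclNorm _ i
      _ ≤ euclNorm (θreg k) + euclNorm θtrue := euclNorm_sub_le _ _
      _ ≤ C + euclNorm θtrue := by linarith [hC k]
  -- R_k v_k → 0 componentwise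
  have hw0 : Tendsto (fun k => (R k) *ᵥ (θreg k - θtrue)) atTop (nhds 0) := by
    rw [tendsto_pi_nhds]
    intro j
    simp only [Matrix.mulVec, dotProduct, Pi.zero_apply]
    have : (0:ℝ) = ∑ _i : Fin n, (0:ℝ) := by simp
    rw [this]
    refine tendsto_finset_sum _ fun i _ => ?_
    have hgk : Tendsto (fun k => |R k j i| * (C + euclNorm θtrue)) atTop (nhds 0) := by
      simpa using ((hentry j i).abs).mul_const (C + euclNorm θtrue)
    refine squeeze_zero_norm (fun k => ?_) hgk
    calc ‖R k j i * (θreg k - θtrue) i‖ = |R k j i| * |θreg k i - θtrue i| := abs_mul _ _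
      _ ≤ |R k j i| * (C + euclNorm θtrue) :=
          mul_le_mul_of_nonneg_left (hvb k i) (abs_nonneg _)
  -- norms tend to zero
  have hwn : Tendsto (fun k => euclNorm ((R k) *ᵥ (θreg k - θtrue))) atTop (nhds 0) := by
    have hcont : Continuous fun v : Fin n → ℝ => euclNorm v :=
      continuous_norm.comp (e.symm.continuous)
    have h := (hcont.tendsto 0).comp hw0
    simpa [euclNorm, Function.comp_def] using h
  have hg : Tendsto (fun k => lam⁻¹ * euclNorm ((R k) *ᵥ (θreg k - θtrue))) atTop (nhds 0) := by
    simpa using hwn.const_mul lam⁻¹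
  have hmain : Tendsto (fun k => euclNorm (θ (k + 1) - θtrue)) atTop (nhds 0) := by
    refine squeeze_zero' (Eventually.of_forall fun k => norm_nonneg _) ?_ hg
    filter_upwards [eventually_ge_atTop krank] with k hk
    exact hbound k hk
  have h5 : Tendsto (fun k => e.symm (θ (k + 1))) atTop (nhds (e.symm θtrue)) := by
    rw [tendsto_iff_norm_sub_tendsto_zero]
    exact hmain
  have h6 : Tendsto (fun k => θ (k + 1)) atTop (nhds θtrue) := by
    have h := (e.continuous.tendsto (e.symm θtrue)).comp h5
    simpa [Function.comp_def] using h
  exact (tendsto_add_atTop_iff_nat 1).mp h6
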